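/- For any ordinal β, left addition preserves and left subtraction reflects the weak gap condition: (a) β + s ≤_w β + t implies s ≤_w t; (b) if ω^β > γ, then ω^β + s ≤_w γ + t implies ω^β + s ≤_w t; here β + s denotes the sequence obtained by adding β on the left to each member of s. -/

import Mathlib

set_option maxRecDepth 8000

/-- The weak gap condition on finite sequences over a linear order. -/
def WeakGap {α : Type*} [LinearOrder α] (s t : List α) : Prop :=
  ∃ f : Fin s.length → Fin t.length,
    StrictMono f ∧
    (∀ i, s.get i ≤ t.get (f i)) ∧
    ∀ (i : ℕ) (h : i + 1 < s.length) (j : Fin t.length),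
      f ⟨i, Nat.lt_of_succ_lt h⟩ < j → j < f ⟨i + 1, h⟩ → s.get ⟨i + 1, h⟩ ≤ t.get j

/-- The strong gap condition on finite sequences over a linear order:
as the weak one, but additionally respecting the outer gap. -/
def StrongGap {α : Type*} [LinearOrder α] (s t : List α) : Prop :=
  ∃ f : Fin s.length → Fin t.length,
    StrictMono f ∧
    (∀ i, s.get i ≤ t.get (f i)) ∧
    (∀ (i : ℕ) (h : i + 1 < s.length) (j : Fin t.length),
      f ⟨i, Nat.lt_of_succ_lt h⟩ < j → j < f ⟨i + 1, h⟩ → s.get ⟨i + 1, h⟩ ≤ t.get j) ∧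
    ∀ (h : 0 < s.length) (j : Fin t.length), j < f ⟨0, h⟩ → s.get ⟨0, h⟩ ≤ t.get j

/-- Dropping a map from the target side of a weak gap embedding, given a
pointwise comparison principle. -/
lemma weakGap_of_map_right {s t : List Ordinal.{0}} (g : Ordinal.{0} → Ordinal.{0})
    (hg : ∀ (i : Fin s.length) (b : Ordinal.{0}), s.get i ≤ g b → s.get i ≤ b)
    (h : WeakGap s (t.map g)) : WeakGap s t := by
  obtain ⟨f, hmono, hle, hgap⟩ := h
  have ht : (t.map g).length = t.length := t.length_map _
  refine ⟨fun i => Fin.cast ht (f i), ?_, ?_, ?_⟩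
  · intro i j hij
    have := hmono hij
    simp only [Fin.lt_def, Fin.coe_cast]
    exact this
  · intro i
    have := hle i
    simp only [List.get_eq_getElem, List.getElem_map] at this
    exact hg i _ this
  · intro i h j h1 h2
    have := hgap i h (Fin.cast ht.symm j) (by simp only [Fin.lt_def, Fin.coe_cast] at h1 ⊢; exact h1)
      (by simp only [Fin.lt_def, Fin.coe_cast] at h2 ⊢; exact h2)
    simp only [List.get_eq_getElem, List.getElem_map] at this
    exact hg _ _ this

/-- Dropping a strictly order-reflecting map from both sides. -/
lemma weakGap_of_map_both {s t : List Ordinal.{0}} (g : Ordinal.{0} → Ordinal.{0})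
    (hg : ∀ a b : Ordinal.{0}, g a ≤ g b → a ≤ b)
    (h : WeakGap (s.map g) (t.map g)) : WeakGap s t := by
  obtain ⟨f, hmono, hle, hgap⟩ := h
  have hs : s.length = (s.map g).length := (s.length_map _).symm
  have ht : (t.map g).length = t.length := t.length_map _
  refine ⟨fun i => Fin.cast ht (f (Fin.cast hs i)), ?_, ?_, ?_⟩
  · intro i j hij
    have := hmono (show Fin.cast hs i < Fin.cast hs j by simp only [Fin.lt_def, Fin.coe_cast]; exact hij)
    simp only [Fin.lt_def, Fin.coe_cast]
    exact this
  · intro i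
    have := hle (Fin.cast hs i)
    simp only [List.get_eq_getElem, List.getElem_map] at this
    exact hg _ _ this
  · intro i h j h1 h2
    have h' : i + 1 < (s.map g).length := by rw [List.length_map]; exact h
    have := hgap i h' (Fin.cast ht.symm j) (by simp only [Fin.lt_def, Fin.coe_cast] at h1 ⊢; exact h1)
      (by simp only [Fin.lt_def, Fin.coe_cast] at h2 ⊢; exact h2)
    simp only [List.get_eq_getElem, List.getElem_map] at this
    exact hg _ _ this

/-- Left addition can be cancelled from the weak gap condition, and smaller
left summands can be dropped when the left-hand side starts with a larger
indecomposable summand. -/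
theorem weakGap_left_addition (β γ : Ordinal.{0}) (s t : List Ordinal.{0}) :
    (WeakGap (s.map (β + ·)) (t.map (β + ·)) → WeakGap s t) ∧
    (Ordinal.omega0 ^ β > γ →
      WeakGap (s.map (Ordinal.omega0 ^ β + ·)) (t.map (γ + ·)) →
        WeakGap (s.map (Ordinal.omega0 ^ β + ·)) t) := by
  constructor
  · exact weakGap_of_map_both (β + ·) (fun a b h => (add_le_add_iff_left β).mp h)
  · intro hγ h
    refine weakGap_of_map_right (γ + ·) (fun i b hib => ?_) h
    have hib' : (s.map (Ordinal.omega0 ^ β + ·)).get i ≤ γ + b := hib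
    have hi' : (i : ℕ) < s.length := lt_of_lt_of_eq i.isLt (s.length_map _)
    have hget : (s.map (Ordinal.omega0 ^ β + ·)).get i = Ordinal.omega0 ^ β + s.get ⟨i, hi'⟩ := by
      simp only [List.get_eq_getElem, List.getElem_map]
    have hωa : Ordinal.omega0 ^ β ≤ (s.map (Ordinal.omega0 ^ β + ·)).get i := by
      rw [hget]; exact le_self_add
    have hωb : Ordinal.omega0 ^ β ≤ b := by
      by_contra hb
      push_neg at hb
      have : γ + b < Ordinal.omega0 ^ β := Ordinal.principal_add_omega0_opow β hγ hb
      exact absurd (hωa.trans hib') this.not_ge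
    rwa [Ordinal.add_absorp hγ hωb] at hib'
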